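/- Let N ∈ ℤ_{≥0} and suppose b − λ − N + 2 = 0. Then for every m̄ ∈ ℤ_{≥0}^{n+1} with |m̄| ≤ N − 1, the column vector X ∈ R^{n+1} with entries X_j := a_j^{−1}·(m_j+1)·σ_j^{−1}(P'_{m̄+ε_j}(S,a)) for 1 ≤ j ≤ n+1 satisfies A(λ,b,S,N)·X = 0, i.e. ∑_{j=1}^{n+1} A_{ij}·X_j = 0 in R for every 1 ≤ i ≤ n+1. -/

import Mathlib

open MvPolynomial

/-- The generators `h_1, …, h_n` of `R = ℂ[h_1,…,h_n]`, together with
`h_{n+1} := -(h_1 + ⋯ + h_n)`.  Indices: `i : Fin (n+1)` with `(i : ℕ) < n`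
corresponding to `h_1, …, h_n` and `i = Fin.last n` to `h_{n+1}`. -/
noncomputable def Hp (n : ℕ) (i : Fin (n + 1)) : MvPolynomial (Fin n) ℂ :=
  if h : (i : ℕ) < n then X ⟨i, h⟩ else -∑ j : Fin n, X j

/-- The automorphism `σ_i` of `R` determined by `σ_i(h_k) = h_k - δ_{k,i}` for `1 ≤ i ≤ n`,
and `σ_{n+1} = id`. -/
noncomputable def sigma (n : ℕ) (i : Fin (n + 1)) :
    MvPolynomial (Fin n) ℂ ≃ₐ[ℂ] MvPolynomial (Fin n) ℂ :=
  if h : (i : ℕ) < n then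
    AlgEquiv.ofAlgHom
      (aeval fun k => X k - if k = ⟨i, h⟩ then 1 else 0)
      (aeval fun k => X k + if k = ⟨i, h⟩ then 1 else 0)
      (by ext k : 1; by_cases hk : k = ⟨i, h⟩ <;> simp [hk])
      (by ext k : 1; by_cases hk : k = ⟨i, h⟩ <;> simp [hk])
  else AlgEquiv.refl

/-- The scalar `a^{m̄}/m̄!`. -/
noncomputable def coef (n : ℕ) (a : Fin (n + 1) → ℂ) (m : Fin (n + 1) → ℕ) : ℂ :=
  (∏ j, a j ^ m j) / ((∏ j, (m j).factorial : ℕ) : ℂ)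

/-- `P_{m̄}(S,a) = (a^{m̄}/m̄!) ∏_{s ∉ S} ∏_{k=1}^{m_s} (h_s - b - k)`. -/
noncomputable def Pm (n : ℕ) (b : ℂ) (S : Finset (Fin (n + 1))) (a : Fin (n + 1) → ℂ)
    (m : Fin (n + 1) → ℕ) : MvPolynomial (Fin n) ℂ :=
  coef n a m • ∏ s ∈ Sᶜ, ∏ k ∈ Finset.range (m s), (Hp n s - C (b + k + 1))

/-- `P'_{m̄}(S,a) = (a^{m̄}/m̄!) ∏_{s∉S, s≠n+1} ∏_{k=1}^{m_s}(h_s - b - k) ⋅ C ⋅`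
`∏_{t=1}^{m_{n+1}}(h_{n+1} + nb - t + 1)`, where
`C = ∏_{r=1}^{N-m_{n+1}}(h_{n+1} - b - 1 + r)` if `n+1 ∈ S` and `C = 1` otherwise. -/
noncomputable def P' (n : ℕ) (b : ℂ) (S : Finset (Fin (n + 1))) (a : Fin (n + 1) → ℂ)
    (N : ℕ) (m : Fin (n + 1) → ℕ) : MvPolynomial (Fin n) ℂ :=
  coef n a m •
    ((∏ s ∈ Sᶜ.erase (Fin.last n), ∏ k ∈ Finset.range (m s), (Hp n s - C (b + k + 1)))
      * (if Fin.last n ∈ S then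
            ∏ r ∈ Finset.range (N - m (Fin.last n)), (Hp n (Fin.last n) - C (b - r))
          else 1)
      * ∏ t ∈ Finset.range (m (Fin.last n)), (Hp n (Fin.last n) + C ((n : ℂ) * b - t)))

/-- `Δ_{m̄}(S,a) = (a^{m̄}/m̄!) ∏_{s∉S} ∏_{k=1}^{m_s}(h_s - b - k) ⋅`
`∏_{r=2}^{N-m_{n+1}}(h_{n+1} - b - 2 + r) ⋅ ∏_{t=1}^{m_{n+1}}(h_{n+1} + nb - t)`. -/
noncomputable def Δm (n : ℕ) (b : ℂ) (S : Finset (Fin (n + 1))) (a : Fin (n + 1) → ℂ)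
    (N : ℕ) (m : Fin (n + 1) → ℕ) : MvPolynomial (Fin n) ℂ :=
  coef n a m •
    ((∏ s ∈ Sᶜ, ∏ k ∈ Finset.range (m s), (Hp n s - C (b + k + 1)))
      * (∏ r ∈ Finset.range (N - m (Fin.last n) - 1), (Hp n (Fin.last n) - C (b - r)))
      * ∏ t ∈ Finset.range (m (Fin.last n)), (Hp n (Fin.last n) + C ((n : ℂ) * b - t - 1)))

/-- `Θ_{m̄}(S,a) = (a^{m̄}/m̄!) ∏_{s∉S, s≠n+1} ∏_{k=1}^{m_s}(h_s - b - k) ⋅`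
`∏_{k=1}^{m_{n+1}}(h_{n+1} - b - k - 1)`. -/
noncomputable def Θm (n : ℕ) (b : ℂ) (S : Finset (Fin (n + 1))) (a : Fin (n + 1) → ℂ)
    (m : Fin (n + 1) → ℕ) : MvPolynomial (Fin n) ℂ :=
  coef n a m •
    ((∏ s ∈ Sᶜ.erase (Fin.last n), ∏ k ∈ Finset.range (m s), (Hp n s - C (b + k + 1)))
      * ∏ k ∈ Finset.range (m (Fin.last n)), (Hp n (Fin.last n) - C (b + k + 2)))

/-- `Υ_{m̄}(S,a) = (a^{m̄}/m̄!) ∏_{s∉S, s≠n+1} ∏_{k=1}^{m_s}(h_s - b - k) ⋅`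
`∏_{t=1}^{m_{n+1}}(h_{n+1} + nb - t)`. -/
noncomputable def Υm (n : ℕ) (b : ℂ) (S : Finset (Fin (n + 1))) (a : Fin (n + 1) → ℂ)
    (m : Fin (n + 1) → ℕ) : MvPolynomial (Fin n) ℂ :=
  coef n a m •
    ((∏ s ∈ Sᶜ.erase (Fin.last n), ∏ k ∈ Finset.range (m s), (Hp n s - C (b + k + 1)))
      * ∏ t ∈ Finset.range (m (Fin.last n)), (Hp n (Fin.last n) + C ((n : ℂ) * b - t - 1)))

/-- `h̄_i = h_i - δ_{i,n+1}`. -/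
noncomputable def Hbar (n : ℕ) (i : Fin (n + 1)) : MvPolynomial (Fin n) ℂ :=
  Hp n i - if i = Fin.last n then 1 else 0

/-- The `(n+1) × (n+1)` matrix `A(λ,b,S,N)` with entries in `R`:
`A_{ii} = h̄_i - λ - N + 2` and, for `i ≠ j`,
`A_{ij} = (δ_{i∈S} + δ_{i∉S}(h̄_i - b)) (δ_{j∈S}(h̄_j - b) + δ_{j∉S})`. -/
noncomputable def Amat (n : ℕ) (lam b : ℂ) (S : Finset (Fin (n + 1))) (N : ℕ) :
    Matrix (Fin (n + 1)) (Fin (n + 1)) (MvPolynomial (Fin n) ℂ) :=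
  fun i j =>
    if i = j then Hbar n i - C (lam + N - 2)
    else (if i ∈ S then 1 else Hbar n i - C b) * (if j ∈ S then Hbar n j - C b else 1)

/-! ### Auxiliary lemmas -/

lemma sigma_symm_Hp (n : ℕ) (j s : Fin (n+1)) :
    (sigma n j).symm (Hp n s) =
      Hp n s + C ((if s = j then 1 else 0) - (if s = Fin.last n then 1 else 0)) := by
  have hlast : ((Fin.last n : Fin (n+1)) : ℕ) = n := rfl
  by_cases hj : (j : ℕ) < n
  · have hjl : j ≠ Fin.last n := by
      intro hh; rw [hh, hlast] at hj; exact lt_irrefl _ hj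
    rw [sigma, dif_pos hj]
    by_cases hs : (s : ℕ) < n
    · have hsl : s ≠ Fin.last n := by
        intro hh; rw [hh, hlast] at hs; exact lt_irrefl _ hs
      rw [Hp, dif_pos hs]
      simp only [AlgEquiv.ofAlgHom_symm_apply, aeval_X]
      have heq : ((⟨(s:ℕ), hs⟩ : Fin n) = ⟨(j:ℕ), hj⟩) ↔ s = j := by
        constructor
        · intro hh; exact Fin.ext (by simpa using congrArg Fin.val hh)
        · intro hh; subst hh; rfl
      by_cases hsj : s = j
      · rw [if_pos (heq.mpr hsj), if_pos hsj, if_neg hsl]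
        simp
      · rw [if_neg (fun hh => hsj (heq.mp hh)), if_neg hsj, if_neg hsl]
        simp
    · have hsl : s = Fin.last n := by
        apply Fin.ext
        rw [hlast]; have := s.isLt; omega
      subst hsl
      rw [Hp, dif_neg hs]
      simp only [AlgEquiv.ofAlgHom_symm_apply, map_neg, map_sum, aeval_X]
      rw [if_neg (Ne.symm hjl), Finset.sum_add_distrib]
      simp
      ring
  · have hjl : j = Fin.last n := by
      apply Fin.ext; rw [hlast]; have := j.isLt; omega
    subst hjl
    rw [sigma, dif_neg hj]
    by_cases hsl : s = Fin.last n
    · subst hsl; simp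
    · rw [if_neg hsl]; simp

lemma sigma_symm_C (n : ℕ) (j : Fin (n+1)) (c : ℂ) :
    (sigma n j).symm (C c) = C c := by
  rw [← MvPolynomial.algebraMap_eq]; exact AlgEquiv.commutes _ c

lemma sigma_symm_sub (n : ℕ) (j s : Fin (n+1)) (c : ℂ) :
    (sigma n j).symm (Hp n s - C c) =
      Hp n s - C (c - ((if s = j then 1 else 0) - (if s = Fin.last n then 1 else 0))) := by
  rw [map_sub, sigma_symm_Hp, sigma_symm_C]
  simp only [map_sub]
  ring

lemma sigma_symm_add (n : ℕ) (j s : Fin (n+1)) (c : ℂ) :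
    (sigma n j).symm (Hp n s + C c) =
      Hp n s + C (c + ((if s = j then 1 else 0) - (if s = Fin.last n then 1 else 0))) := by
  rw [map_add, sigma_symm_Hp, sigma_symm_C]
  simp only [map_add, map_sub]
  ring

lemma sigma_last (n : ℕ) : sigma n (Fin.last n) = AlgEquiv.refl := by
  rw [sigma, dif_neg]; simp

lemma Hp_last (n : ℕ) : Hp n (Fin.last n) = -∑ j : Fin n, X j := by
  rw [Hp, dif_neg]; simp

/-- The product part of `P'`. -/
noncomputable def Body (n : ℕ) (b : ℂ) (S : Finset (Fin (n + 1))) (N : ℕ)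
    (m : Fin (n + 1) → ℕ) : MvPolynomial (Fin n) ℂ :=
  (∏ s ∈ Sᶜ.erase (Fin.last n), ∏ k ∈ Finset.range (m s), (Hp n s - C (b + k + 1)))
    * (if Fin.last n ∈ S then
          ∏ r ∈ Finset.range (N - m (Fin.last n)), (Hp n (Fin.last n) - C (b - r))
        else 1)
    * ∏ t ∈ Finset.range (m (Fin.last n)), (Hp n (Fin.last n) + C ((n : ℂ) * b - t))

lemma P'_eq (n : ℕ) (b : ℂ) (S : Finset (Fin (n + 1))) (a : Fin (n + 1) → ℂ)
    (N : ℕ) (m : Fin (n + 1) → ℕ) :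
    P' n b S a N m = coef n a m • Body n b S N m := rfl

lemma aux_div (aj M P F : ℂ) (ha : aj ≠ 0) (hM : M + 1 ≠ 0) (hF : F ≠ 0) :
    aj⁻¹ * (M + 1) * ((aj * P) / ((M + 1) * F)) = P / F := by
  field_simp

lemma coef_succ (n : ℕ) (a : Fin (n + 1) → ℂ) (ha : ∀ j, a j ≠ 0)
    (m : Fin (n + 1) → ℕ) (j : Fin (n + 1)) :
    (a j)⁻¹ * ((m j : ℂ) + 1) * coef n a (fun l => m l + if l = j then 1 else 0)
      = coef n a m := by
  have h1 : (∏ l, a l ^ (m l + if l = j then 1 else 0)) = a j * ∏ l, a l ^ m l := by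
    rw [Finset.prod_congr rfl (g := fun l => a l ^ m l * (if l = j then a l else 1))
      (fun l _ => by split_ifs with h <;> simp [h, pow_succ])]
    rw [Finset.prod_mul_distrib]
    simp [mul_comm]
  have h2 : (∏ l, (m l + if l = j then 1 else 0).factorial)
      = (m j + 1) * ∏ l, (m l).factorial := by
    rw [Finset.prod_congr rfl (g := fun l => (if l = j then m l + 1 else 1) * (m l).factorial)
      (fun l _ => by split_ifs with h <;> simp [h, Nat.factorial_succ])]
    rw [Finset.prod_mul_distrib]
    simp
  have hf : ((∏ l, (m l).factorial : ℕ) : ℂ) ≠ 0 :=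
    Nat.cast_ne_zero.mpr (Finset.prod_ne_zero_iff.mpr (fun l _ => (Nat.factorial_pos _).ne'))
  have hm1 : ((m j : ℂ) + 1) ≠ 0 := Nat.cast_add_one_ne_zero (m j)
  unfold coef
  rw [h1, h2, Nat.cast_mul, Nat.cast_add, Nat.cast_one]
  exact aux_div _ _ _ _ (ha j) hm1 hf

noncomputable def Phi (n : ℕ) (b : ℂ) (S : Finset (Fin (n + 1))) (m : Fin (n + 1) → ℕ) :
    MvPolynomial (Fin n) ℂ :=
  ∏ s ∈ Sᶜ.erase (Fin.last n), ∏ k ∈ Finset.range (m s), (Hp n s - C (b + k + 1))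

noncomputable def Wp (n : ℕ) (b : ℂ) (S : Finset (Fin (n + 1))) (N : ℕ)
    (m : Fin (n + 1) → ℕ) : MvPolynomial (Fin n) ℂ :=
  if Fin.last n ∈ S then
    (Hp n (Fin.last n) - C (b + 1)) *
      ∏ r ∈ Finset.range (N - m (Fin.last n) - 1), (Hp n (Fin.last n) - C (b - r))
  else 1

noncomputable def Tsh (n : ℕ) (b : ℂ) (m : Fin (n + 1) → ℕ) : MvPolynomial (Fin n) ℂ :=
  ∏ t ∈ Finset.range (m (Fin.last n)), (Hp n (Fin.last n) + C ((n : ℂ) * b - t - 1))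

noncomputable def Tf (n : ℕ) (b : ℂ) (m : Fin (n + 1) → ℕ) : MvPolynomial (Fin n) ℂ :=
  ∏ t ∈ Finset.range (m (Fin.last n) + 1), (Hp n (Fin.last n) + C ((n : ℂ) * b - t))

lemma castSucc_ne_last {n : ℕ} (j : Fin n) : j.castSucc ≠ Fin.last n :=
  (Fin.castSucc_lt_last j).ne

lemma Hp_castSucc {n : ℕ} (j : Fin n) : Hp n j.castSucc = X j := by
  rw [Hp, dif_pos (by exact j.isLt : ((j.castSucc : Fin (n+1)) : ℕ) < n)]
  congr 1

lemma sigB3 (n : ℕ) (b : ℂ) (m : Fin (n + 1) → ℕ) (j : Fin n) :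
    (sigma n j.castSucc).symm
        (∏ t ∈ Finset.range (m (Fin.last n) + if Fin.last n = j.castSucc then 1 else 0),
          (Hp n (Fin.last n) + C ((n : ℂ) * b - t))) = Tsh n b m := by
  rw [if_neg (Ne.symm (castSucc_ne_last j)), add_zero, map_prod, Tsh]
  refine Finset.prod_congr rfl (fun t _ => ?_)
  rw [sigma_symm_add, if_neg (Ne.symm (castSucc_ne_last j)), if_pos rfl]
  congr 1
  ring

lemma sigB2 (n : ℕ) (b : ℂ) (S : Finset (Fin (n + 1))) (N : ℕ) (m : Fin (n + 1) → ℕ)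
    (hmlast : m (Fin.last n) < N) (j : Fin n) :
    (sigma n j.castSucc).symm
        (if Fin.last n ∈ S then
          ∏ r ∈ Finset.range (N - (m (Fin.last n) + if Fin.last n = j.castSucc then 1 else 0)),
            (Hp n (Fin.last n) - C (b - r))
        else 1) = Wp n b S N m := by
  rw [if_neg (Ne.symm (castSucc_ne_last j)), add_zero, Wp]
  by_cases hLS : Fin.last n ∈ S
  · rw [if_pos hLS, if_pos hLS, map_prod]
    have hK : N - m (Fin.last n) = (N - m (Fin.last n) - 1) + 1 := by omega
    have hfac : ∀ r : ℕ, (sigma n j.castSucc).symm (Hp n (Fin.last n) - C (b - r))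
        = Hp n (Fin.last n) - C (b + 1 - r) := by
      intro r
      rw [sigma_symm_sub, if_neg (Ne.symm (castSucc_ne_last j)), if_pos rfl]
      congr 1
      ring
    rw [Finset.prod_congr rfl (fun r _ => hfac r), hK, Finset.prod_range_succ']
    rw [mul_comm]
    congr 1
    · congr 1
      norm_num
    · refine Finset.prod_congr rfl (fun r _ => ?_)
      congr 1
      push_cast
      ring
  · rw [if_neg hLS, if_neg hLS, map_one]

lemma sigB1 (n : ℕ) (b : ℂ) (S : Finset (Fin (n + 1))) (m : Fin (n + 1) → ℕ) (j : Fin n) :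
    (if j.castSucc ∈ S then Hbar n j.castSucc - C b else 1) *
      (sigma n j.castSucc).symm
        (∏ s ∈ Sᶜ.erase (Fin.last n),
          ∏ k ∈ Finset.range (m s + if s = j.castSucc then 1 else 0),
            (Hp n s - C (b + k + 1)))
      = (X j - C b) * Phi n b S m := by
  have hjL := castSucc_ne_last j
  have hfix : ∀ s ∈ Sᶜ.erase (Fin.last n), s ≠ j.castSucc →
      (sigma n j.castSucc).symm
          (∏ k ∈ Finset.range (m s + if s = j.castSucc then 1 else 0), (Hp n s - C (b + k + 1)))
        = ∏ k ∈ Finset.range (m s), (Hp n s - C (b + k + 1)) := by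
    intro s hs hsj
    rw [if_neg hsj, add_zero, map_prod]
    refine Finset.prod_congr rfl (fun k _ => ?_)
    rw [sigma_symm_sub, if_neg hsj, if_neg (Finset.ne_of_mem_erase hs)]
    congr 1
    ring
  rw [map_prod]
  by_cases hjS : j.castSucc ∈ S
  · rw [if_pos hjS]
    have hΦ : ∏ s ∈ Sᶜ.erase (Fin.last n), (sigma n j.castSucc).symm
          (∏ k ∈ Finset.range (m s + if s = j.castSucc then 1 else 0), (Hp n s - C (b + k + 1)))
        = Phi n b S m := by
      refine Finset.prod_congr rfl (fun s hs => ?_)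
      have hsj : s ≠ j.castSucc := by
        intro hh
        exact (Finset.mem_compl.mp (Finset.mem_of_mem_erase hs)) (hh ▸ hjS)
      exact hfix s hs hsj
    rw [hΦ, Hbar, if_neg hjL, sub_zero, Hp_castSucc]
  · rw [if_neg hjS, one_mul]
    have hjE : j.castSucc ∈ Sᶜ.erase (Fin.last n) :=
      Finset.mem_erase.mpr ⟨hjL, Finset.mem_compl.mpr hjS⟩
    rw [← Finset.mul_prod_erase _ _ hjE, Phi, ← Finset.mul_prod_erase _ _ hjE]
    have herase : ∏ s ∈ (Sᶜ.erase (Fin.last n)).erase j.castSucc, (sigma n j.castSucc).symm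
          (∏ k ∈ Finset.range (m s + if s = j.castSucc then 1 else 0), (Hp n s - C (b + k + 1)))
        = ∏ s ∈ (Sᶜ.erase (Fin.last n)).erase j.castSucc,
            ∏ k ∈ Finset.range (m s), (Hp n s - C (b + k + 1)) := by
      refine Finset.prod_congr rfl (fun s hs => ?_)
      exact hfix s (Finset.mem_of_mem_erase hs) (Finset.ne_of_mem_erase hs)
    rw [herase]
    have hjfac : (sigma n j.castSucc).symm
          (∏ k ∈ Finset.range (m j.castSucc + if j.castSucc = j.castSucc then 1 else 0),
            (Hp n j.castSucc - C (b + k + 1)))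
        = (X j - C b) * ∏ k ∈ Finset.range (m j.castSucc), (Hp n j.castSucc - C (b + k + 1)) := by
      rw [if_pos rfl, map_prod]
      have hfac : ∀ k : ℕ, (sigma n j.castSucc).symm (Hp n j.castSucc - C (b + k + 1))
          = Hp n j.castSucc - C (b + k) := by
        intro k
        rw [sigma_symm_sub, if_pos rfl, if_neg hjL]
        congr 1
        ring
      rw [Finset.prod_congr rfl (fun k _ => hfac k), Finset.prod_range_succ']
      rw [mul_comm]
      congr 1
      · rw [Hp_castSucc]
        congr 1
        norm_num
      · refine Finset.prod_congr rfl (fun k _ => ?_)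
        congr 1
        push_cast
        ring
    rw [hjfac]
    ring

lemma body_castSucc (n : ℕ) (b : ℂ) (S : Finset (Fin (n + 1))) (N : ℕ)
    (m : Fin (n + 1) → ℕ) (hmlast : m (Fin.last n) < N) (j : Fin n) :
    (if j.castSucc ∈ S then Hbar n j.castSucc - C b else 1) *
      (sigma n j.castSucc).symm
        (Body n b S N (fun l => m l + if l = j.castSucc then 1 else 0))
      = (X j - C b) * (Phi n b S m * (Wp n b S N m * Tsh n b m)) := by
  rw [Body, map_mul, map_mul, sigB2 n b S N m hmlast j, sigB3 n b m j]
  have h1 := sigB1 n b S m j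
  linear_combination (Wp n b S N m * Tsh n b m) * h1

lemma body_last (n : ℕ) (b : ℂ) (S : Finset (Fin (n + 1))) (N : ℕ)
    (m : Fin (n + 1) → ℕ) (hmlast : m (Fin.last n) < N) :
    (if Fin.last n ∈ S then Hbar n (Fin.last n) - C b else 1) *
      (sigma n (Fin.last n)).symm
        (Body n b S N (fun l => m l + if l = Fin.last n then 1 else 0))
      = Phi n b S m * (Wp n b S N m * Tf n b m) := by
  have hid : ∀ p : MvPolynomial (Fin n) ℂ,
      (AlgEquiv.refl : MvPolynomial (Fin n) ℂ ≃ₐ[ℂ] MvPolynomial (Fin n) ℂ).symm p = p :=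
    fun p => rfl
  rw [sigma_last, hid, Body]
  have hΦ : (∏ s ∈ Sᶜ.erase (Fin.last n),
      ∏ k ∈ Finset.range (m s + if s = Fin.last n then 1 else 0), (Hp n s - C (b + k + 1)))
      = Phi n b S m := by
    refine Finset.prod_congr rfl (fun s hs => ?_)
    rw [if_neg (Finset.ne_of_mem_erase hs), add_zero]
  have hTf : (∏ t ∈ Finset.range (m (Fin.last n) + if Fin.last n = Fin.last n then 1 else 0),
      (Hp n (Fin.last n) + C ((n : ℂ) * b - t))) = Tf n b m := by
    rw [if_pos rfl, Tf]
  rw [hΦ, hTf]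
  by_cases hLS : Fin.last n ∈ S
  · rw [if_pos hLS, if_pos hLS, if_pos rfl, Wp, if_pos hLS]
    have hKK : N - (m (Fin.last n) + 1) = N - m (Fin.last n) - 1 := by omega
    rw [hKK]
    have hv : Hbar n (Fin.last n) - C b = Hp n (Fin.last n) - C (b + 1) := by
      rw [Hbar, if_pos rfl, map_add, map_one]
      ring
    rw [hv]
    ring
  · rw [if_neg hLS, if_neg hLS, Wp, if_neg hLS]
    ring

lemma sumX (n : ℕ) (b : ℂ) :
    ∑ j : Fin n, (X j - C b : MvPolynomial (Fin n) ℂ)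
      = -(Hp n (Fin.last n) + C ((n : ℂ) * b)) := by
  rw [Finset.sum_sub_distrib, Finset.sum_const, Finset.card_univ, Fintype.card_fin, Hp_last]
  have : (C ((n : ℂ) * b) : MvPolynomial (Fin n) ℂ) = n • C b := by
    rw [map_mul, nsmul_eq_mul]
    congr 1
  rw [this]
  ring

lemma TshTf (n : ℕ) (b : ℂ) (m : Fin (n + 1) → ℕ) :
    (Hp n (Fin.last n) + C ((n : ℂ) * b)) * Tsh n b m = Tf n b m := by
  rw [Tf, Finset.prod_range_succ', mul_comm, Tsh]
  congr 1
  · refine Finset.prod_congr rfl (fun t _ => ?_)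
    congr 1
    push_cast
    ring
  · congr 1
    norm_num

lemma keylemma (n : ℕ) (b : ℂ) (S : Finset (Fin (n + 1))) (a : Fin (n + 1) → ℂ)
    (ha : ∀ j, a j ≠ 0) (N : ℕ) (m : Fin (n + 1) → ℕ) (hm : (∑ j, m j) + 1 ≤ N) :
    ∑ j, (if j ∈ S then Hbar n j - C b else 1) *
      (((a j)⁻¹ * (m j + 1 : ℂ)) •
        (sigma n j).symm (P' n b S a N (fun l => m l + if l = j then 1 else 0))) = 0 := by
  have hmlast : m (Fin.last n) < N := by
    have h1 : m (Fin.last n) ≤ ∑ j, m j :=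
      Finset.single_le_sum (fun i _ => Nat.zero_le _) (Finset.mem_univ _)
    omega
  have step1 : ∀ j : Fin (n + 1),
      (if j ∈ S then Hbar n j - C b else 1) *
        (((a j)⁻¹ * (m j + 1 : ℂ)) •
          (sigma n j).symm (P' n b S a N (fun l => m l + if l = j then 1 else 0)))
      = coef n a m • ((if j ∈ S then Hbar n j - C b else 1) *
          (sigma n j).symm (Body n b S N (fun l => m l + if l = j then 1 else 0))) := by
    intro j
    rw [P'_eq, map_smul, smul_smul, coef_succ n a ha m j, mul_smul_comm]
  rw [Finset.sum_congr rfl (fun j _ => step1 j), ← Finset.smul_sum, Fin.sum_univ_castSucc]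
  rw [Finset.sum_congr rfl (fun j _ => body_castSucc n b S N m hmlast j),
    body_last n b S N m hmlast, ← Finset.sum_mul, sumX, ← TshTf n b m]
  have hz : (-(Hp n (Fin.last n) + C ((n : ℂ) * b))) *
        (Phi n b S m * (Wp n b S N m * Tsh n b m)) +
      Phi n b S m * (Wp n b S N m * ((Hp n (Fin.last n) + C ((n : ℂ) * b)) * Tsh n b m)) = 0 := by
    ring
  rw [hz, smul_zero]

/-- Lemma: if `b - λ - N + 2 = 0` then, for every `m̄` with `|m̄| ≤ N - 1`, the vector with
entries `X_j = a_j⁻¹ (m_j+1) σ_j⁻¹(P'_{m̄+ε_j}(S,a))` satisfies `A(λ,b,S,N) X = 0`. -/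
theorem statement18 (n : ℕ) (hn : 1 ≤ n) (lam b : ℂ) (S : Finset (Fin (n + 1)))
    (a : Fin (n + 1) → ℂ) (ha : ∀ j, a j ≠ 0) (halast : a (Fin.last n) = 1)
    (N : ℕ) (h : b - lam - N + 2 = 0) (m : Fin (n + 1) → ℕ)
    (hm : (∑ j, m j) + 1 ≤ N) (i : Fin (n + 1)) :
    ∑ j, Amat n lam b S N i j *
        ((a j)⁻¹ * (m j + 1 : ℂ)) •
          (sigma n j).symm (P' n b S a N (fun l => m l + if l = j then 1 else 0))
      = 0 := by
  have hbb : (C (lam + (N : ℂ) - 2) : MvPolynomial (Fin n) ℂ) = C b := by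
    congr 1
    linear_combination -h
  have hA : ∀ j, Amat n lam b S N i j
      = (if i ∈ S then 1 else Hbar n i - C b) * (if j ∈ S then Hbar n j - C b else 1) := by
    intro j
    rw [Amat]
    by_cases hij : i = j
    · subst hij
      rw [if_pos rfl, hbb]
      by_cases hiS : i ∈ S
      · rw [if_pos hiS, if_pos hiS, one_mul]
      · rw [if_neg hiS, if_neg hiS, mul_one]
    · rw [if_neg hij]
  rw [Finset.sum_congr rfl (fun j _ => by rw [hA j, mul_assoc]), ← Finset.mul_sum,
    keylemma n b S a ha N m hm, mul_zero]
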